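/- arXiv:2102.08352 — 4 statements merged into one kernel-verified Lean document; each statement's English description precedes it below -/
import Mathlib

section
/- Let Z be a finite-dimensional real normed vector space, g : Z → ℝ ∪ {+∞} proper convex lower semicontinuous, and h a convex function differentiable at z_1, z_2 and on a neighborhood of the minimizer below, with Bregman distance D(u,v) = h(u) − h(v) − ⟨∇h(v), u − v⟩. Let α ∈ [0,1], u ∈ Z*, z_1, z_2 ∈ Z, and suppose z⁺ is a minimizer of z ↦ g(z) + ⟨u, z⟩ + α D(z, z_1) + (1−α) D(z, z_2), with h differentiable at z⁺. Then for every z ∈ dom g: g(z) − g(z⁺) + ⟨u, z − z⁺⟩ ≥ D(z, z⁺) + α (D(z⁺, z_1) − D(z, z_1)) + (1−α) (D(z⁺, z_2) − D(z, z_2)). -/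
open Set

/-- **Bregman proximal inequality (three-point lemma).**
If `z⁺` minimizes `z ↦ g(z) + ⟨u, z⟩ + α D(z, z₁) + (1 - α) D(z, z₂)`, where
`D(u,v) = h(u) - h(v) - ⟨∇h(v), u - v⟩` is the Bregman distance of a convex function `h`
differentiable at `z₁`, `z₂` and `z⁺`, and `g` is convex lower semicontinuous, then for
every `z`:
`g(z) - g(z⁺) + ⟨u, z - z⁺⟩ ≥ D(z, z⁺) + α (D(z⁺, z₁) - D(z, z₁)) + (1-α)(D(z⁺, z₂) - D(z, z₂))`. -/
theorem stmt_4
    {E : Type*} [NormedAddCommGroup E] [NormedSpace ℝ E] [FiniteDimensional ℝ E]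
    (g : E → ℝ) (hg_cvx : ConvexOn ℝ Set.univ g) (hg_lsc : LowerSemicontinuous g)
    (h : E → ℝ) (hh_cvx : ConvexOn ℝ Set.univ h)
    (hgrad : E → StrongDual ℝ E)
    (D : E → E → ℝ) (hD : ∀ u v, D u v = h u - h v - hgrad v (u - v))
    (α : ℝ) (hα : α ∈ Set.Icc (0 : ℝ) 1)
    (u : StrongDual ℝ E) (z₁ z₂ zp : E)
    (hdiff₁ : HasFDerivAt h (hgrad z₁) z₁)
    (hdiff₂ : HasFDerivAt h (hgrad z₂) z₂)
    (hdiffp : HasFDerivAt h (hgrad zp) zp)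
    (hmin : IsMinOn (fun z => g z + u z + α * D z z₁ + (1 - α) * D z z₂) Set.univ zp) :
    ∀ z : E,
      g z - g zp + u (z - zp)
        ≥ D z zp + α * (D zp z₁ - D z z₁) + (1 - α) * (D zp z₂ - D z z₂) := by
  intro z
  set v := z - zp with hv
  -- directional derivative of h at zp in direction v
  have hderiv : HasDerivAt (fun t : ℝ => h (zp + t • v)) (hgrad zp v) 0 := by
    have hline : HasDerivAt (fun t : ℝ => zp + t • v) v 0 := by
      simpa using ((hasDerivAt_id (0 : ℝ)).smul_const v).const_add zp
    have hd2 : HasFDerivAt h (hgrad zp) (zp + (0:ℝ) • v) := by simpa using hdiffp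
    exact hd2.comp_hasDerivAt 0 hline
  have htend : Filter.Tendsto (fun t : ℝ => (h (zp + t • v) - h zp) / t)
      (nhdsWithin 0 (Set.Ioi 0)) (nhds (hgrad zp v)) := by
    rw [hasDerivAt_iff_tendsto_slope] at hderiv
    have h1 : Filter.Tendsto (slope (fun t : ℝ => h (zp + t • v)) 0)
        (nhdsWithin 0 (Set.Ioi 0)) (nhds (hgrad zp v)) :=
      hderiv.mono_left (nhdsWithin_mono _ (by intro x hx; exact ne_of_gt hx))
    refine h1.congr' ?_
    filter_upwards [self_mem_nhdsWithin] with t ht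
    simp [slope_def_field, div_eq_inv_mul]
  -- key inequality for t ∈ (0,1)
  have key : ∀ t : ℝ, t ∈ Set.Ioo (0 : ℝ) 1 →
      α * hgrad z₁ v + (1 - α) * hgrad z₂ v - (g z - g zp + u v)
        ≤ (h (zp + t • v) - h zp) / t := by
    intro t ht
    have hzt : zp + t • v = (1 - t) • zp + t • z := by
      rw [hv]; module
    have hgc : g (zp + t • v) ≤ (1 - t) * g zp + t * g z := by
      rw [hzt]
      exact hg_cvx.2 (mem_univ zp) (mem_univ z) (by linarith [ht.2]) ht.1.le (by ring)
    have hmin' := hmin (Set.mem_univ (zp + t • v))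
    simp only [Set.mem_setOf_eq, hD, hv, map_sub, map_add, map_smul, smul_eq_mul] at hmin' ⊢
    rw [le_div_iff₀ ht.1]
    nlinarith [hmin', hgc, ht.1, ht.2]
  have hlim : α * hgrad z₁ v + (1 - α) * hgrad z₂ v - (g z - g zp + u v)
      ≤ hgrad zp v := by
    refine ge_of_tendsto htend ?_
    filter_upwards [Ioo_mem_nhdsGT_of_mem (by norm_num : (0:ℝ) ∈ Set.Ico (0:ℝ) 1)] with t ht
    exact key t ht
  simp only [hD, hv, map_sub] at hlim ⊢
  nlinarith [hlim]
end

section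
/- Let the Bregman setup, the monotone operator F with variable L-Lipschitz oracle, and the MP-VR iterates (z_k^s, z_{k+1/2}^s, w^s) with the quantities Θ_{k+1/2}^s(z), e(z,s,k), δ(s,k) be as in the context. Let α ∈ [0,1) and τ = γ√(1−α)/L for some γ ∈ (0,1). Then for every z ∈ dom g and every epoch s ≥ 0 (pathwise, for every realization of the random indices): Σ_{k=0}^{K−1} τ Θ_{k+1/2}^s(z) + α D(z, z_0^{s+1}) + (1−α) Σ_{j=1}^K D(z, z_j^s) ≤ α D(z, z_0^s) + (1−α) Σ_{j=1}^K D(z, z_j^{s−1}) + Σ_{k=0}^{K−1} [e(z, s, k) + δ(s, k)]. -/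
open MeasureTheory Finset

section MPVRAux

open Filter Set Topology

lemma mpvr_core {E : Type*} [NormedAddCommGroup E] [NormedSpace ℝ E]
    (g : E → ℝ) (hg : ConvexOn ℝ Set.univ g)
    (h : E → ℝ) (hp' : E →L[ℝ] ℝ) (p : E) (hdiffp : HasFDerivAt h hp' p)
    (A : E → ℝ) (hA : ∀ (x y : E) (t : ℝ), A (x + t • (y - x)) = A x + t * (A y - A x))
    (Λ : ℝ)
    (hp : IsMinOn (fun z => g z + A z + Λ * h z) Set.univ p) (z : E) :
    g p + A p + Λ * h p + Λ * (h z - h p - hp' (z - p)) ≤ g z + A z + Λ * h z := by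
  have key : -(Λ * hp' (z - p)) ≤ g z + A z - (g p + A p) := by
    set c : ℝ → E := fun t => p + t • (z - p) with hc
    have h0 : c 0 = p := by simp [hc]
    have hc' : HasDerivAt c (z - p) 0 := by
      rw [hc]
      simpa using ((hasDerivAt_id (0:ℝ)).smul_const (z - p)).const_add p
    have hder : HasDerivAt (fun t : ℝ => h (c t)) (hp' (z - p)) 0 :=
      (show HasFDerivAt h hp' (c 0) by rw [h0]; exact hdiffp).comp_hasDerivAt 0 hc'
    have hslope : Tendsto (slope (fun t => h (c t)) 0) (𝓝[>] 0) (𝓝 (hp' (z - p))) :=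
      (hasDerivAt_iff_tendsto_slope.mp hder).mono_left
        (nhdsWithin_mono 0 (fun x hx => ne_of_gt hx))
    have hlim : Tendsto (fun t => Λ * (h p - h (c t)) / t) (𝓝[>] 0)
        (𝓝 (-(Λ * hp' (z - p)))) := by
      have h1 := (hslope.const_mul Λ).neg
      refine h1.congr (fun t => ?_)
      rw [slope_def_field, h0]
      ring
    refine le_of_tendsto hlim ?_
    filter_upwards [Ioc_mem_nhdsGT_of_mem (show (0:ℝ) ∈ Set.Ico 0 1 by constructor <;> norm_num)]
      with t ht
    obtain ⟨ht0, ht1⟩ := ht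
    have hmin := isMinOn_iff.mp hp (c t) (Set.mem_univ _)
    have hcvx : g (c t) ≤ (1 - t) * g p + t * g z := by
      have hcomb : c t = (1 - t) • p + t • z := by
        simp [hc, sub_smul, smul_sub]; abel
      rw [hcomb]
      simpa [smul_eq_mul] using
        hg.2 (Set.mem_univ p) (Set.mem_univ z) (by linarith) ht0.le (by ring)
    have hAt : A (c t) = A p + t * (A z - A p) := hA p z t
    rw [div_le_iff₀ ht0]
    linarith [hmin]
  linarith [key]

lemma mpvr_three_point {E : Type*} [NormedAddCommGroup E] [NormedSpace ℝ E]
    (g : E → ℝ) (hg : ConvexOn ℝ Set.univ g)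
    (h : E → ℝ) (hgrad : E → StrongDual ℝ E)
    (hdiff : ∀ x : E, HasFDerivAt h (hgrad x) x)
    (D : E → E → ℝ) (hD : ∀ u v, D u v = h u - h v - hgrad v (u - v))
    (ζ : StrongDual ℝ E) (a b : ℝ) (cc : E) (K : ℕ) (m : ℕ → E) (p : E)
    (hp : IsMinOn (fun z => g z + ζ z + a * D z cc
        + b * ∑ j ∈ Finset.Icc 1 K, D z (m j)) Set.univ p)
    (z : E) :
    g p + ζ p + a * D p cc + b * ∑ j ∈ Finset.Icc 1 K, D p (m j) + (a + b * K) * D z p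
      ≤ g z + ζ z + a * D z cc + b * ∑ j ∈ Finset.Icc 1 K, D z (m j) := by
  set A : E → ℝ := fun x => ζ x - a * hgrad cc x - b * ∑ j ∈ Finset.Icc 1 K, hgrad (m j) x
    with hAdef
  set c0 : ℝ := a * (- h cc + hgrad cc cc)
      + b * ∑ j ∈ Finset.Icc 1 K, (- h (m j) + hgrad (m j) (m j)) with hc0
  have hcard : (((Finset.Icc 1 K).card : ℕ) : ℝ) = (K : ℝ) := by simp
  have heq : ∀ x : E, g x + ζ x + a * D x cc + b * ∑ j ∈ Finset.Icc 1 K, D x (m j)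
      = g x + A x + (a + b * K) * h x + c0 := by
    intro x
    have hterm : ∀ j ∈ Finset.Icc 1 K,
        D x (m j) = h x + (- h (m j) + hgrad (m j) (m j)) - hgrad (m j) x := by
      intro j _
      rw [hD]
      simp only [map_sub]
      ring
    have h1 : ∑ j ∈ Finset.Icc 1 K, D x (m j)
        = (K : ℝ) * h x + ∑ j ∈ Finset.Icc 1 K, (- h (m j) + hgrad (m j) (m j))
          - ∑ j ∈ Finset.Icc 1 K, hgrad (m j) x := by
      rw [Finset.sum_congr rfl hterm, Finset.sum_sub_distrib, Finset.sum_add_distrib,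
        Finset.sum_const, nsmul_eq_mul, hcard]
    rw [hD x cc, h1, hAdef, hc0]
    simp only [map_sub]
    ring
  have hmin : IsMinOn (fun x => g x + A x + (a + b * K) * h x) Set.univ p := by
    refine isMinOn_iff.mpr fun x _ => ?_
    have h2 := isMinOn_iff.mp hp x (Set.mem_univ x)
    rw [heq p, heq x] at h2
    linarith
  have hA : ∀ (x y : E) (t : ℝ), A (x + t • (y - x)) = A x + t * (A y - A x) := by
    intro x y t
    have hz : ∀ (φ : StrongDual ℝ E), φ (x + t • (y - x)) = φ x + t * (φ y - φ x) := by
      intro φ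
      rw [map_add, _root_.map_smul, map_sub, smul_eq_mul]
    simp only [hAdef, hz]
    rw [Finset.sum_add_distrib, ← Finset.mul_sum, Finset.sum_sub_distrib]
    ring
  have hcore := mpvr_core g hg h (hgrad p) p (hdiff p) A hA (a + b * K) hmin z
  have e1 := heq p
  have e2 := heq z
  rw [hD z p] at *
  linarith [hcore, e1, e2]

end MPVRAux

/-- **Per-epoch pathwise estimate for Mirror-Prox with variance reduction (Bregman setup),
part (i) of the key lemma.**  For any point `z`, any epoch `s`, and any realization of the
random indices, the iterates of MP-VR satisfy
`Σ_{k<K} τ Θ_{k+1/2}^s(z) + α D(z, z_0^{s+1}) + (1-α) Σ_{j=1}^K D(z, z_j^s)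
  ≤ α D(z, z_0^s) + (1-α) Σ_{j=1}^K D(z, z_j^{s-1}) + Σ_{k<K} [e(z,s,k) + δ(s,k)]`. -/
theorem stmt_5
    {E : Type*} [NormedAddCommGroup E] [NormedSpace ℝ E] [FiniteDimensional ℝ E]
    {Ξ : Type*} [MeasurableSpace Ξ]
    -- proper convex lsc g and the Bregman structure
    (g : E → ℝ) (hg_cvx : ConvexOn ℝ Set.univ g) (hg_lsc : LowerSemicontinuous g)
    (h : E → ℝ) (hh_cvx : ConvexOn ℝ Set.univ h)
    (hgrad : E → StrongDual ℝ E)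
    (hdiff : ∀ x : E, HasFDerivAt h (hgrad x) x)
    (D : E → E → ℝ) (hD : ∀ u v, D u v = h u - h v - hgrad v (u - v))
    (hD_lower : ∀ u v : E, ‖u - v‖ ^ 2 / 2 ≤ D u v)  -- 1-strong convexity of h
    -- monotone operator with a variable L-Lipschitz-in-mean unbiased oracle
    (F : E → StrongDual ℝ E) (hF_mono : ∀ u v : E, 0 ≤ (F u - F v) (u - v))
    (Fo : Ξ → E → StrongDual ℝ E)
    (Qd : E → E → Measure Ξ) (hQd_prob : ∀ u v, IsProbabilityMeasure (Qd u v))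
    (L : ℝ) (hL : 0 < L)
    (h_unbiased : ∀ u v z : E, ∫ ξ, Fo ξ z ∂(Qd u v) = F z)
    (h_lip : ∀ u v : E, ∫ ξ, ‖Fo ξ u - Fo ξ v‖ ^ 2 ∂(Qd u v) ≤ L ^ 2 * ‖u - v‖ ^ 2)
    -- parameters
    (α γ τ : ℝ) (hα : α ∈ Set.Ico (0 : ℝ) 1) (hγ : γ ∈ Set.Ioo (0 : ℝ) 1)
    (hτ : τ = γ * Real.sqrt (1 - α) / L)
    (K : ℕ) (hK : 0 < K)
    -- the MP-VR iterates along a realization `ξs` of the random indices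
    (z0 : E) (ξs : ℕ → ℕ → Ξ)
    (zz zhalf zm : ℕ → ℕ → E) (w : ℕ → E)
    (hzz0 : zz 0 0 = z0) (hzm0 : ∀ j, zm 0 j = z0)
    (hzm_succ : ∀ s j, zm (s + 1) j = zz s j)
    (hw0 : w 0 = z0)
    (hw_succ : ∀ s, w (s + 1) = (K : ℝ)⁻¹ • ∑ k ∈ Finset.Icc 1 K, zz s k)
    (hz0_succ : ∀ s, zz (s + 1) 0 = zz s K)
    (hhalf : ∀ s, ∀ k < K,
      IsMinOn (fun zv => g zv + F (w s) zv + (α / τ) * D zv (zz s k)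
          + ((1 - α) / (τ * K)) * ∑ j ∈ Finset.Icc 1 K, D zv (zm s j))
        Set.univ (zhalf s k))
    (hfull : ∀ s, ∀ k < K,
      IsMinOn (fun zv => g zv
          + (F (w s) + Fo (ξs s k) (zhalf s k) - Fo (ξs s k) (w s)) zv
          + (α / τ) * D zv (zz s k)
          + ((1 - α) / (τ * K)) * ∑ j ∈ Finset.Icc 1 K, D zv (zm s j))
        Set.univ (zz s (k + 1)))
    -- the quantities appearing in the estimate
    (Θ : ℕ → ℕ → E → ℝ)
    (hΘ : ∀ s k zv, Θ s k zv
      = F (zhalf s k) (zhalf s k - zv) + g (zhalf s k) - g zv)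
    (e : E → ℕ → ℕ → ℝ)
    (he : ∀ zv s k, e zv s k
      = τ * ((F (zhalf s k) - Fo (ξs s k) (zhalf s k)
          - F (w s) + Fo (ξs s k) (w s)) (zhalf s k - zv)))
    (δ : ℕ → ℕ → ℝ)
    (hδ : ∀ s k, δ s k
      = τ * ((Fo (ξs s k) (w s) - Fo (ξs s k) (zhalf s k)) (zz s (k + 1) - zhalf s k))
        - ‖zz s (k + 1) - zhalf s k‖ ^ 2 / 2
        - ((1 - α) / 2) * ‖zhalf s k - w s‖ ^ 2) :
    ∀ (zv : E) (s : ℕ),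
      (∑ k ∈ Finset.range K, τ * Θ s k zv)
          + α * D zv (zz (s + 1) 0)
          + (1 - α) * ∑ j ∈ Finset.Icc 1 K, D zv (zz s j)
        ≤ α * D zv (zz s 0)
          + (1 - α) * ∑ j ∈ Finset.Icc 1 K, D zv (zm s j)
          + ∑ k ∈ Finset.range K, (e zv s k + δ s k) := by
  intro zv s
  have hα0 : (0:ℝ) ≤ α := hα.1
  have hα1 : α < 1 := hα.2
  have hτ0 : 0 < τ := by
    rw [hτ]
    have h1 : 0 < Real.sqrt (1 - α) := Real.sqrt_pos.mpr (by linarith)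
    have h2 : 0 < γ := hγ.1
    positivity
  have hKR : (0:ℝ) < K := by exact_mod_cast hK
  have hKne : (K:ℝ) ≠ 0 := ne_of_gt hKR
  have hwavg : w s = (K : ℝ)⁻¹ • ∑ j ∈ Finset.Icc 1 K, zm s j := by
    cases s with
    | zero =>
      rw [hw0, Finset.sum_congr rfl (fun j _ => hzm0 j), Finset.sum_const,
        ← Nat.cast_smul_eq_nsmul ℝ, smul_smul]
      simp [Nat.card_Icc, inv_mul_cancel₀ hKne]
    | succ s' =>
      rw [hw_succ]
      congr 1
      exact Finset.sum_congr rfl fun j _ => (hzm_succ s' j).symm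
  -- per-step inequality
  have step : ∀ k, k < K → τ * Θ s k zv + D zv (zz s (k+1))
      ≤ α * D zv (zz s k)
        + (1 - α) / (K:ℝ) * (∑ j ∈ Finset.Icc 1 K, D zv (zm s j))
        + e zv s k + δ s k := by
    intro k hk
    have hg' : ConvexOn ℝ Set.univ (fun z => τ * g z) := by
      simpa [smul_eq_mul] using hg_cvx.smul hτ0.le
    have hscale : ∀ (ζ : StrongDual ℝ E) (x : E),
        τ * g x + (τ • ζ) x + α * D x (zz s k)
          + ((1 - α) / (K:ℝ)) * ∑ j ∈ Finset.Icc 1 K, D x (zm s j)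
        = τ * (g x + ζ x + (α / τ) * D x (zz s k)
          + ((1 - α) / (τ * K)) * ∑ j ∈ Finset.Icc 1 K, D x (zm s j)) := by
      intro ζ x
      simp only [ContinuousLinearMap.smul_apply, smul_eq_mul]
      field_simp
    have hminB : IsMinOn (fun x => τ * g x + (τ • F (w s)) x + α * D x (zz s k)
        + ((1 - α) / (K:ℝ)) * ∑ j ∈ Finset.Icc 1 K, D x (zm s j)) Set.univ (zhalf s k) := by
      refine isMinOn_iff.mpr fun x _ => ?_
      rw [hscale, hscale]
      exact mul_le_mul_of_nonneg_left (isMinOn_iff.mp (hhalf s k hk) x (Set.mem_univ x)) hτ0.le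
    have hminA : IsMinOn (fun x => τ * g x
        + (τ • (F (w s) + Fo (ξs s k) (zhalf s k) - Fo (ξs s k) (w s))) x
        + α * D x (zz s k)
        + ((1 - α) / (K:ℝ)) * ∑ j ∈ Finset.Icc 1 K, D x (zm s j)) Set.univ (zz s (k+1)) := by
      refine isMinOn_iff.mpr fun x _ => ?_
      rw [hscale, hscale]
      exact mul_le_mul_of_nonneg_left (isMinOn_iff.mp (hfull s k hk) x (Set.mem_univ x)) hτ0.le
    have hB := mpvr_three_point (fun z => τ * g z) hg' h hgrad hdiff D hD (τ • F (w s)) α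
      ((1 - α)/(K:ℝ)) (zz s k) K (zm s) (zhalf s k) hminB (zz s (k+1))
    have hA := mpvr_three_point (fun z => τ * g z) hg' h hgrad hdiff D hD
      (τ • (F (w s) + Fo (ξs s k) (zhalf s k) - Fo (ξs s k) (w s))) α
      ((1 - α)/(K:ℝ)) (zz s k) K (zm s) (zz s (k+1)) hminA zv
    have hcoef : α + (1 - α) / (K:ℝ) * (K:ℝ) = 1 := by field_simp; ring
    rw [hcoef, one_mul] at hA hB
    have hn1 : ‖zz s (k+1) - zhalf s k‖ ^ 2 / 2 ≤ D (zz s (k+1)) (zhalf s k) := hD_lower _ _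
    have hn2 : 0 ≤ α * D (zhalf s k) (zz s k) :=
      mul_nonneg hα0 (le_trans (by positivity) (hD_lower (zhalf s k) (zz s k)))
    have hn3 : (1 - α) / 2 * ‖zhalf s k - w s‖ ^ 2
        ≤ (1 - α) / (K:ℝ) * ∑ j ∈ Finset.Icc 1 K, D (zhalf s k) (zm s j) := by
      have havg : zhalf s k - w s
          = (K:ℝ)⁻¹ • ∑ j ∈ Finset.Icc 1 K, (zhalf s k - zm s j) := by
        rw [hwavg, Finset.sum_sub_distrib, Finset.sum_const, ← Nat.cast_smul_eq_nsmul ℝ,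
          smul_sub, smul_smul]
        simp [Nat.card_Icc, inv_mul_cancel₀ hKne]
      have hnorm1 : ‖zhalf s k - w s‖
          ≤ (K:ℝ)⁻¹ * ∑ j ∈ Finset.Icc 1 K, ‖zhalf s k - zm s j‖ := by
        rw [havg, norm_smul, norm_inv, Real.norm_natCast]
        exact mul_le_mul_of_nonneg_left (norm_sum_le _ _) (by positivity)
      have hCS : (∑ j ∈ Finset.Icc 1 K, ‖zhalf s k - zm s j‖) ^ 2
          ≤ (K:ℝ) * ∑ j ∈ Finset.Icc 1 K, ‖zhalf s k - zm s j‖ ^ 2 := by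
        have hcs := sq_sum_le_card_mul_sum_sq (s := Finset.Icc 1 K)
          (f := fun j => ‖zhalf s k - zm s j‖)
        simpa [Nat.card_Icc] using hcs
      have hsq : ‖zhalf s k - w s‖ ^ 2
          ≤ (K:ℝ)⁻¹ * ∑ j ∈ Finset.Icc 1 K, ‖zhalf s k - zm s j‖ ^ 2 := by
        have h1 : ‖zhalf s k - w s‖ ^ 2
            ≤ ((K:ℝ)⁻¹ * ∑ j ∈ Finset.Icc 1 K, ‖zhalf s k - zm s j‖) ^ 2 :=
          pow_le_pow_left₀ (norm_nonneg _) hnorm1 2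
        calc ‖zhalf s k - w s‖ ^ 2
            ≤ ((K:ℝ)⁻¹)^2 * (∑ j ∈ Finset.Icc 1 K, ‖zhalf s k - zm s j‖) ^ 2 := by
              rw [← mul_pow]; exact h1
          _ ≤ ((K:ℝ)⁻¹)^2 * ((K:ℝ) * ∑ j ∈ Finset.Icc 1 K, ‖zhalf s k - zm s j‖ ^ 2) :=
              mul_le_mul_of_nonneg_left hCS (by positivity)
          _ = (K:ℝ)⁻¹ * ∑ j ∈ Finset.Icc 1 K, ‖zhalf s k - zm s j‖ ^ 2 := by
              field_simp
      have hsumD : ∑ j ∈ Finset.Icc 1 K, ‖zhalf s k - zm s j‖ ^ 2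
          ≤ 2 * ∑ j ∈ Finset.Icc 1 K, D (zhalf s k) (zm s j) := by
        have h2 := Finset.sum_le_sum
          (fun j (_ : j ∈ Finset.Icc 1 K) => hD_lower (zhalf s k) (zm s j))
        rw [← Finset.sum_div] at h2
        linarith
      calc (1 - α) / 2 * ‖zhalf s k - w s‖ ^ 2
          ≤ (1 - α) / 2 * ((K:ℝ)⁻¹ * (2 * ∑ j ∈ Finset.Icc 1 K, D (zhalf s k) (zm s j))) := by
            refine mul_le_mul_of_nonneg_left ?_ (by linarith)
            exact le_trans hsq (mul_le_mul_of_nonneg_left hsumD (by positivity))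
        _ = (1 - α) / (K:ℝ) * ∑ j ∈ Finset.Icc 1 K, D (zhalf s k) (zm s j) := by
            field_simp
    rw [hΘ, he, hδ]
    simp only [ContinuousLinearMap.smul_apply, ContinuousLinearMap.add_apply,
      ContinuousLinearMap.sub_apply, map_sub, smul_eq_mul] at hA hB ⊢
    linarith [hA, hB, hn1, hn2, hn3]
  -- sum over k
  have hsum := Finset.sum_le_sum (fun k hk => step k (Finset.mem_range.mp hk))
  rw [Finset.sum_add_distrib] at hsum
  have hRHS : ∑ k ∈ Finset.range K,
      (α * D zv (zz s k)
        + (1 - α) / (K:ℝ) * (∑ j ∈ Finset.Icc 1 K, D zv (zm s j))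
        + e zv s k + δ s k)
      = α * ∑ k ∈ Finset.range K, D zv (zz s k)
        + (1 - α) * (∑ j ∈ Finset.Icc 1 K, D zv (zm s j))
        + ∑ k ∈ Finset.range K, (e zv s k + δ s k) := by
    have hconst : ∑ _k ∈ Finset.range K,
        ((1 - α) / (K:ℝ) * (∑ j ∈ Finset.Icc 1 K, D zv (zm s j)))
        = (1 - α) * (∑ j ∈ Finset.Icc 1 K, D zv (zm s j)) := by
      rw [Finset.sum_const, Finset.card_range, nsmul_eq_mul]
      field_simp
    simp only [Finset.sum_add_distrib]
    rw [hconst, ← Finset.mul_sum]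
    ring
  rw [hRHS] at hsum
  have htel : (∑ k ∈ Finset.range K, D zv (zz s k)) + D zv (zz s K)
      = (∑ k ∈ Finset.range K, D zv (zz s (k+1))) + D zv (zz s 0) := by
    rw [← Finset.sum_range_succ, Finset.sum_range_succ']
  have htelα : α * (∑ k ∈ Finset.range K, D zv (zz s k)) + α * D zv (zz s K)
      = α * (∑ k ∈ Finset.range K, D zv (zz s (k+1))) + α * D zv (zz s 0) := by
    linear_combination α * htel
  have hicc : ∑ j ∈ Finset.Icc 1 K, D zv (zz s j)
      = ∑ k ∈ Finset.range K, D zv (zz s (k+1)) := by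
    rw [← Finset.Ico_add_one_right_eq_Icc, Finset.sum_Ico_eq_sum_range]
    refine Finset.sum_congr (by norm_num) fun i _ => by rw [Nat.add_comm]
  rw [hz0_succ s, hicc]
  linarith [hsum, htelα]
end

section
/- Let A ∈ ℝ^{m×n} be a matrix with every row and every column nonzero, and let ‖A‖_Frob = √(Σ_{i,j} A_{ij}²). Define r_i = ‖A_{i:}‖₂²/‖A‖_Frob² for i ∈ [m] and c_j = ‖A_{:j}‖₂²/‖A‖_Frob² for j ∈ [n], and for z = (x, y) ∈ ℝⁿ × ℝᵐ and (i,j) ∈ [m] × [n] define F_{(i,j)}(z) = ((1/r_i) A_{i:} y_i, −(1/c_j) A_{:j} x_j) ∈ ℝⁿ × ℝᵐ, where A_{i:} ∈ ℝⁿ is the i-th row and A_{:j} ∈ ℝᵐ is the j-th column of A. Then for every z = (x,y): Σ_{i=1}^m Σ_{j=1}^n r_i c_j ‖F_{(i,j)}(z)‖₂² = ‖A‖_Frob² ‖z‖₂², where ‖z‖₂² = ‖x‖₂² + ‖y‖₂². In other words, the importance-sampling oracle ξ = (i,j) with Pr{ξ = (i,j)} = r_i c_j satisfies E‖F_ξ(z)‖₂²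 = ‖A‖_Frob² ‖z‖₂². -/
open Finset

/-- **Importance sampling oracle for bilinear problems (Euclidean setup).**
For a matrix `A` with nonzero rows and columns, the importance-sampling stochastic
oracle `F_{(i,j)}(z) = ((1/r_i) A_{i:} y_i, -(1/c_j) A_{:j} x_j)` with
`Pr{ξ = (i,j)} = r_i c_j`, `r_i = ‖A_{i:}‖₂²/‖A‖_F²`, `c_j = ‖A_{:j}‖₂²/‖A‖_F²`,
satisfies `E‖F_ξ(z)‖₂² = ‖A‖_F² ‖z‖₂²`. -/
theorem stmt_13 (m n : ℕ) (A : Matrix (Fin m) (Fin n) ℝ)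
    (hrow : ∀ i, ∃ j, A i j ≠ 0) (hcol : ∀ j, ∃ i, A i j ≠ 0)
    (frob2 : ℝ) (hfrob2 : frob2 = ∑ i, ∑ j, (A i j) ^ 2)
    (r : Fin m → ℝ) (c : Fin n → ℝ)
    (hr : ∀ i, r i = (∑ j, (A i j) ^ 2) / frob2)
    (hc : ∀ j, c j = (∑ i, (A i j) ^ 2) / frob2)
    (x : Fin n → ℝ) (y : Fin m → ℝ) :
    ∑ i, ∑ j, (r i * c j) *
        ((∑ l, ((r i)⁻¹ * A i l * y i) ^ 2) + (∑ l, ((c j)⁻¹ * A l j * x j) ^ 2))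
      = frob2 * ((∑ j, (x j) ^ 2) + (∑ i, (y i) ^ 2)) := by
  rcases Nat.eq_zero_or_pos m with hm | hm
  · subst hm
    simp [hfrob2]
  rcases Nat.eq_zero_or_pos n with hn | hn
  · subst hn
    simp [hfrob2]
  have : NeZero m := ⟨hm.ne'⟩
  have : NeZero n := ⟨hn.ne'⟩
  have hR : ∀ i, 0 < ∑ j, (A i j) ^ 2 := by
    intro i
    obtain ⟨j, hj⟩ := hrow i
    exact lt_of_lt_of_le (by positivity)
      (Finset.single_le_sum (fun _ _ => sq_nonneg _) (mem_univ j))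
  have hC : ∀ j, 0 < ∑ i, (A i j) ^ 2 := by
    intro j
    obtain ⟨i, hi⟩ := hcol j
    exact lt_of_lt_of_le (by positivity)
      (Finset.single_le_sum (fun _ _ => sq_nonneg _) (mem_univ i))
  have hF : 0 < frob2 := by
    rw [hfrob2]
    exact Finset.sum_pos (fun i _ => hR i) Finset.univ_nonempty
  have key : ∀ i j, (r i * c j) *
        ((∑ l, ((r i)⁻¹ * A i l * y i) ^ 2) + (∑ l, ((c j)⁻¹ * A l j * x j) ^ 2))
      = frob2 * (c j * (y i) ^ 2) + frob2 * (r i * (x j) ^ 2) := by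
    intro i j
    have e1 : ∑ l, ((r i)⁻¹ * A i l * y i) ^ 2
        = (r i)⁻¹ ^ 2 * (y i) ^ 2 * ∑ l, (A i l) ^ 2 := by
      rw [Finset.mul_sum]; exact Finset.sum_congr rfl fun l _ => by ring
    have e2 : ∑ l, ((c j)⁻¹ * A l j * x j) ^ 2
        = (c j)⁻¹ ^ 2 * (x j) ^ 2 * ∑ l, (A l j) ^ 2 := by
      rw [Finset.mul_sum]; exact Finset.sum_congr rfl fun l _ => by ring
    rw [e1, e2, hr i, hc j]
    have h1 := (hR i).ne'
    have h2 := (hC j).ne'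
    field_simp
  calc ∑ i, ∑ j, (r i * c j) *
        ((∑ l, ((r i)⁻¹ * A i l * y i) ^ 2) + (∑ l, ((c j)⁻¹ * A l j * x j) ^ 2))
      = ∑ i, ∑ j, (frob2 * (c j * (y i) ^ 2) + frob2 * (r i * (x j) ^ 2)) :=
        Finset.sum_congr rfl fun i _ => Finset.sum_congr rfl fun j _ => key i j
    _ = frob2 * ((∑ j, (x j) ^ 2) + (∑ i, (y i) ^ 2)) := by
        have hsr : ∑ i, r i = 1 := by
          simp only [hr]
          rw [← Finset.sum_div, ← hfrob2, div_self hF.ne']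
        have hsc : ∑ j, c j = 1 := by
          simp only [hc]
          rw [← Finset.sum_div, Finset.sum_comm, ← hfrob2, div_self hF.ne']
        simp only [Finset.sum_add_distrib, ← Finset.mul_sum, ← Finset.sum_mul]
        rw [hsr, hsc]; ring
end

section
/- Let A ∈ ℝ^{m×n} and let ‖A‖_max = max_{i,j} |A_{ij}|. Let u = (u^x, u^y), v = (v^x, v^y) ∈ ℝⁿ × ℝᵐ with u^x ≠ v^x and u^y ≠ v^y. Define the sampling-from-the-difference distribution Pr{ξ = (i,j)} = r_i c_j with r_i = |u^y_i − v^y_i| / ‖u^y − v^y‖₁ and c_j = |u^x_j − v^x_j| / ‖u^x − v^x‖₁, and for z = (x,y) and indices (i,j) with r_i > 0, c_j > 0 define F_{(i,j)}(z) = ((1/r_i) A_{i:} y_i, −(1/c_j) A_{:j} x_j). Then E_{ξ∼Q(u,v)} ‖F_ξ(u) − F_ξ(v)‖_*² = Σ_{i : r_i>0} (1/r_i) ‖A_{i:}‖_∞² |u^y_i − v^y_i|² + Σ_{j : c_j>0} (1/c_j) ‖A_{:j}‖_∞² |u^x_j − v^x_j|² ≤ ‖A‖_max² (‖u^x − v^x‖₁²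 + ‖u^y − v^y‖₁²) = ‖A‖_max² ‖u − v‖², where ‖(a, b)‖_*² = ‖a‖_∞² + ‖b‖_∞² and ‖(x, y)‖² = ‖x‖₁² + ‖y‖₁². -/
open Finset

lemma aux_alg1 (rr d B : ℝ) (h : rr ≠ 0) : rr * (rr⁻¹ * d * B) ^ 2 = rr⁻¹ * B ^ 2 * d ^ 2 := by
  field_simp

lemma aux_alg2 (S B d : ℝ) (hd : d ≠ 0) : S / d * B * d ^ 2 = B * (S * d) := by
  field_simp

lemma aux_sup_mul {ι : Type*} [Fintype ι] [Nonempty ι] (a b : ℝ) (f : ι → ℝ) :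
    (⨆ l, |a * f l * b|) = |a| * |b| * ⨆ l, |f l| := by
  have h : ∀ l, |a * f l * b| = (|a| * |b|) * |f l| := fun l => by
    rw [abs_mul, abs_mul]; ring
  simp_rw [h]
  exact (Real.mul_iSup_of_nonneg (by positivity) _).symm

/-- **"Sampling from the difference" oracle for matrix games is variable
`‖A‖_max`-Lipschitz in the `ℓ1/ℓ∞` setup.**  With `r_i = |u^y_i - v^y_i| / ‖u^y - v^y‖₁`,
`c_j = |u^x_j - v^x_j| / ‖u^x - v^x‖₁`, `Pr{ξ = (i,j)} = r_i c_j` and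
`F_{(i,j)}(x,y) = ((1/r_i) A_{i:} y_i, -(1/c_j) A_{:j} x_j)`, one has
`E ‖F_ξ(u) - F_ξ(v)‖_*² = Σ_{i : r_i > 0} (1/r_i) ‖A_{i:}‖_∞² |u^y_i - v^y_i|²
+ Σ_{j : c_j > 0} (1/c_j) ‖A_{:j}‖_∞² |u^x_j - v^x_j|² ≤ ‖A‖_max² ‖u - v‖²`,
where `‖(a,b)‖_*² = ‖a‖_∞² + ‖b‖_∞²` and `‖(x,y)‖² = ‖x‖₁² + ‖y‖₁²`. -/
theorem stmt_14 (m n : ℕ) (A : Matrix (Fin m) (Fin n) ℝ)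
    (Amax : ℝ) (hAmax : Amax = ⨆ i, ⨆ j, |A i j|)
    (ux vx : Fin n → ℝ) (uy vy : Fin m → ℝ)
    (hux : ux ≠ vx) (huy : uy ≠ vy)
    (r : Fin m → ℝ) (c : Fin n → ℝ)
    (hr : ∀ i, r i = |uy i - vy i| / ∑ i', |uy i' - vy i'|)
    (hc : ∀ j, c j = |ux j - vx j| / ∑ j', |ux j' - vx j'|) :
    (∑ i, ∑ j, (r i * c j) *
        ((⨆ l, |(r i)⁻¹ * A i l * (uy i - vy i)|) ^ 2
          + (⨆ l, |(c j)⁻¹ * A l j * (ux j - vx j)|) ^ 2)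
      = (∑ i ∈ univ.filter (fun i => 0 < r i),
            (r i)⁻¹ * (⨆ l, |A i l|) ^ 2 * |uy i - vy i| ^ 2)
        + (∑ j ∈ univ.filter (fun j => 0 < c j),
            (c j)⁻¹ * (⨆ l, |A l j|) ^ 2 * |ux j - vx j| ^ 2)) ∧
    ((∑ i ∈ univ.filter (fun i => 0 < r i),
          (r i)⁻¹ * (⨆ l, |A i l|) ^ 2 * |uy i - vy i| ^ 2)
        + (∑ j ∈ univ.filter (fun j => 0 < c j),
            (c j)⁻¹ * (⨆ l, |A l j|) ^ 2 * |ux j - vx j| ^ 2)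
      ≤ Amax ^ 2 * ((∑ j, |ux j - vx j|) ^ 2 + (∑ i, |uy i - vy i|) ^ 2)) := by
  haveI hm : Nonempty (Fin m) :=
    not_isEmpty_iff.mp (fun h => huy (funext fun i => (h.false i).elim))
  haveI hn : Nonempty (Fin n) :=
    not_isEmpty_iff.mp (fun h => hux (funext fun j => (h.false j).elim))
  set Sy := ∑ i', |uy i' - vy i'| with hSy
  set Sx := ∑ j', |ux j' - vx j'| with hSx
  have Sy_pos : 0 < Sy := by
    rcases Function.ne_iff.mp huy with ⟨i, hi⟩
    exact Finset.sum_pos' (fun i _ => abs_nonneg _)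
      ⟨i, mem_univ i, abs_pos.mpr (sub_ne_zero.mpr hi)⟩
  have Sx_pos : 0 < Sx := by
    rcases Function.ne_iff.mp hux with ⟨j, hj⟩
    exact Finset.sum_pos' (fun j _ => abs_nonneg _)
      ⟨j, mem_univ j, abs_pos.mpr (sub_ne_zero.mpr hj)⟩
  have hr0 : ∀ i, 0 ≤ r i := fun i => by rw [hr]; positivity
  have hc0 : ∀ j, 0 ≤ c j := fun j => by rw [hc]; positivity
  have hsumr : ∑ i, r i = 1 := by
    simp only [hr, ← Finset.sum_div]
    exact div_self Sy_pos.ne'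
  have hsumc : ∑ j, c j = 1 := by
    simp only [hc, ← Finset.sum_div]
    exact div_self Sx_pos.ne'
  -- nonnegativity of sups
  have hBr : ∀ i : Fin m, 0 ≤ ⨆ l, |A i l| := fun i => Real.iSup_nonneg fun l => abs_nonneg _
  have hBc : ∀ j : Fin n, 0 ≤ ⨆ l, |A l j| := fun j => Real.iSup_nonneg fun l => abs_nonneg _
  -- sup bounds
  have hAmax0 : 0 ≤ Amax := hAmax ▸ Real.iSup_nonneg fun i => hBr i
  have hle : ∀ i l, |A i l| ≤ Amax := by
    intro i l
    rw [hAmax]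
    calc |A i l| ≤ ⨆ l', |A i l'| :=
        le_ciSup (f := fun l' => |A i l'|) (Set.Finite.bddAbove (Set.finite_range _)) l
      _ ≤ ⨆ i', ⨆ l', |A i' l'| :=
        le_ciSup (f := fun i' => ⨆ l', |A i' l'|) (Set.Finite.bddAbove (Set.finite_range _)) i
  have hBrle : ∀ i : Fin m, (⨆ l, |A i l|) ≤ Amax := fun i => ciSup_le fun l => hle i l
  have hBcle : ∀ j : Fin n, (⨆ l, |A l j|) ≤ Amax := fun j => ciSup_le fun l => hle l j
  -- per-index identities
  have hRy : ∀ i, r i * (⨆ l, |(r i)⁻¹ * A i l * (uy i - vy i)|) ^ 2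
      = (if 0 < r i then (r i)⁻¹ * (⨆ l, |A i l|) ^ 2 * |uy i - vy i| ^ 2 else 0) := by
    intro i
    by_cases h : 0 < r i
    · rw [if_pos h, aux_sup_mul]
      rw [abs_of_nonneg (inv_nonneg.mpr (hr0 i))]
      exact aux_alg1 _ _ _ h.ne'
    · rw [if_neg h]
      have : r i = 0 := le_antisymm (not_lt.mp h) (hr0 i)
      rw [this, zero_mul]
  have hRx : ∀ j, c j * (⨆ l, |(c j)⁻¹ * A l j * (ux j - vx j)|) ^ 2
      = (if 0 < c j then (c j)⁻¹ * (⨆ l, |A l j|) ^ 2 * |ux j - vx j| ^ 2 else 0) := by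
    intro j
    by_cases h : 0 < c j
    · rw [if_pos h, aux_sup_mul]
      rw [abs_of_nonneg (inv_nonneg.mpr (hc0 j))]
      exact aux_alg1 _ _ _ h.ne'
    · rw [if_neg h]
      have : c j = 0 := le_antisymm (not_lt.mp h) (hc0 j)
      rw [this, zero_mul]
  have key : (∑ i, ∑ j, (r i * c j) *
        ((⨆ l, |(r i)⁻¹ * A i l * (uy i - vy i)|) ^ 2
          + (⨆ l, |(c j)⁻¹ * A l j * (ux j - vx j)|) ^ 2))
      = (∑ i ∈ univ.filter (fun i => 0 < r i),
            (r i)⁻¹ * (⨆ l, |A i l|) ^ 2 * |uy i - vy i| ^ 2)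
        + (∑ j ∈ univ.filter (fun j => 0 < c j),
            (c j)⁻¹ * (⨆ l, |A l j|) ^ 2 * |ux j - vx j| ^ 2) := by
    rw [Finset.sum_filter, Finset.sum_filter]
    have h1 : ∀ i : Fin m, (∑ j, (r i * c j) *
        ((⨆ l, |(r i)⁻¹ * A i l * (uy i - vy i)|) ^ 2
          + (⨆ l, |(c j)⁻¹ * A l j * (ux j - vx j)|) ^ 2))
        = (r i * (⨆ l, |(r i)⁻¹ * A i l * (uy i - vy i)|) ^ 2) * (∑ j, c j)
          + r i * (∑ j, c j * (⨆ l, |(c j)⁻¹ * A l j * (ux j - vx j)|) ^ 2) := by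
      intro i
      rw [Finset.mul_sum, Finset.mul_sum, ← Finset.sum_add_distrib]
      exact Finset.sum_congr rfl (fun j _ => by ring)
    calc (∑ i, ∑ j, (r i * c j) *
        ((⨆ l, |(r i)⁻¹ * A i l * (uy i - vy i)|) ^ 2
          + (⨆ l, |(c j)⁻¹ * A l j * (ux j - vx j)|) ^ 2))
        = ∑ i, ((r i * (⨆ l, |(r i)⁻¹ * A i l * (uy i - vy i)|) ^ 2) * (∑ j, c j)
          + r i * (∑ j, c j * (⨆ l, |(c j)⁻¹ * A l j * (ux j - vx j)|) ^ 2)) :=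
          Finset.sum_congr rfl (fun i _ => h1 i)
      _ = (∑ i, r i * (⨆ l, |(r i)⁻¹ * A i l * (uy i - vy i)|) ^ 2)
          + (∑ i, r i) * (∑ j, c j * (⨆ l, |(c j)⁻¹ * A l j * (ux j - vx j)|) ^ 2) := by
          rw [Finset.sum_add_distrib, ← Finset.sum_mul, ← Finset.sum_mul, hsumc, mul_one]
      _ = (∑ i, if 0 < r i then (r i)⁻¹ * (⨆ l, |A i l|) ^ 2 * |uy i - vy i| ^ 2 else 0)
          + (∑ j, if 0 < c j then (c j)⁻¹ * (⨆ l, |A l j|) ^ 2 * |ux j - vx j| ^ 2 else 0) := by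
          rw [hsumr, one_mul]
          exact congrArg₂ (· + ·) (Finset.sum_congr rfl fun i _ => hRy i)
            (Finset.sum_congr rfl fun j _ => hRx j)
  refine ⟨key, ?_⟩
  have boundy : (∑ i ∈ univ.filter (fun i => 0 < r i),
        (r i)⁻¹ * (⨆ l, |A i l|) ^ 2 * |uy i - vy i| ^ 2) ≤ Amax ^ 2 * Sy ^ 2 := by
    have step : ∀ i ∈ univ.filter (fun i => 0 < r i),
        (r i)⁻¹ * (⨆ l, |A i l|) ^ 2 * |uy i - vy i| ^ 2
          ≤ Amax ^ 2 * (Sy * |uy i - vy i|) := by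
      intro i hi
      rw [Finset.mem_filter] at hi
      have hri : 0 < r i := hi.2
      have hinv : (r i)⁻¹ = Sy / |uy i - vy i| := by
        rw [hr i, inv_div]
      have habs : 0 < |uy i - vy i| := by
        by_contra h
        have : |uy i - vy i| = 0 := le_antisymm (not_lt.mp h) (abs_nonneg _)
        rw [hr i, this, zero_div] at hri
        exact lt_irrefl 0 hri
      have hsup : (⨆ l, |A i l|) ^ 2 ≤ Amax ^ 2 :=
        pow_le_pow_left₀ (hBr i) (hBrle i) 2
      calc (r i)⁻¹ * (⨆ l, |A i l|) ^ 2 * |uy i - vy i| ^ 2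
          ≤ (r i)⁻¹ * Amax ^ 2 * |uy i - vy i| ^ 2 := by
            apply mul_le_mul_of_nonneg_right _ (by positivity)
            exact mul_le_mul_of_nonneg_left hsup (inv_nonneg.mpr (hr0 i))
        _ = Amax ^ 2 * (Sy * |uy i - vy i|) := by
            rw [hinv]; exact aux_alg2 _ _ _ habs.ne'
    calc (∑ i ∈ univ.filter (fun i => 0 < r i),
          (r i)⁻¹ * (⨆ l, |A i l|) ^ 2 * |uy i - vy i| ^ 2)
        ≤ ∑ i ∈ univ.filter (fun i => 0 < r i), Amax ^ 2 * (Sy * |uy i - vy i|) :=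
          Finset.sum_le_sum step
      _ ≤ ∑ i, Amax ^ 2 * (Sy * |uy i - vy i|) := by
          apply Finset.sum_le_sum_of_subset_of_nonneg (Finset.filter_subset _ _)
          intro i _ _; positivity
      _ = Amax ^ 2 * Sy ^ 2 := by
          rw [← Finset.mul_sum, ← Finset.mul_sum, ← hSy]; ring
  have boundx : (∑ j ∈ univ.filter (fun j => 0 < c j),
        (c j)⁻¹ * (⨆ l, |A l j|) ^ 2 * |ux j - vx j| ^ 2) ≤ Amax ^ 2 * Sx ^ 2 := by
    have step : ∀ j ∈ univ.filter (fun j => 0 < c j),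
        (c j)⁻¹ * (⨆ l, |A l j|) ^ 2 * |ux j - vx j| ^ 2
          ≤ Amax ^ 2 * (Sx * |ux j - vx j|) := by
      intro j hj
      rw [Finset.mem_filter] at hj
      have hcj : 0 < c j := hj.2
      have hinv : (c j)⁻¹ = Sx / |ux j - vx j| := by
        rw [hc j, inv_div]
      have habs : 0 < |ux j - vx j| := by
        by_contra h
        have : |ux j - vx j| = 0 := le_antisymm (not_lt.mp h) (abs_nonneg _)
        rw [hc j, this, zero_div] at hcj
        exact lt_irrefl 0 hcj
      have hsup : (⨆ l, |A l j|) ^ 2 ≤ Amax ^ 2 :=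
        pow_le_pow_left₀ (hBc j) (hBcle j) 2
      calc (c j)⁻¹ * (⨆ l, |A l j|) ^ 2 * |ux j - vx j| ^ 2
          ≤ (c j)⁻¹ * Amax ^ 2 * |ux j - vx j| ^ 2 := by
            apply mul_le_mul_of_nonneg_right _ (by positivity)
            exact mul_le_mul_of_nonneg_left hsup (inv_nonneg.mpr (hc0 j))
        _ = Amax ^ 2 * (Sx * |ux j - vx j|) := by
            rw [hinv]; exact aux_alg2 _ _ _ habs.ne'
    calc (∑ j ∈ univ.filter (fun j => 0 < c j),
          (c j)⁻¹ * (⨆ l, |A l j|) ^ 2 * |ux j - vx j| ^ 2)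
        ≤ ∑ j ∈ univ.filter (fun j => 0 < c j), Amax ^ 2 * (Sx * |ux j - vx j|) :=
          Finset.sum_le_sum step
      _ ≤ ∑ j, Amax ^ 2 * (Sx * |ux j - vx j|) := by
          apply Finset.sum_le_sum_of_subset_of_nonneg (Finset.filter_subset _ _)
          intro j _ _; positivity
      _ = Amax ^ 2 * Sx ^ 2 := by
          rw [← Finset.mul_sum, ← Finset.mul_sum, ← hSx]; ring
  calc _ ≤ Amax ^ 2 * Sy ^ 2 + Amax ^ 2 * Sx ^ 2 := add_le_add boundy boundx
    _ = Amax ^ 2 * (Sx ^ 2 + Sy ^ 2) := by ring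
end
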